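/- arXiv:1304.5337 — 2 statements merged into one kernel-verified Lean document; each statement's English description precedes it below -/
import Mathlib

section
/- Let K > 0, k, h ∈ ℝ, let U ⊆ ℝ² be open, and let w : U → ℝ be four times continuously differentiable with L w = kK − h·e^x and w_xx > 0 on U, where L w = w_xx + (k−h−1)w_x − k·w − w_t. Then the function v := w_xt/w_xx is well defined on U and satisfies the parabolic equation v_xx + ((k−h−1) + 2·w_xxx/w_xx)·v_x + ((L w_xx)/w_xx)·v − v_t = 0 on U, where L w_xx = −h·e^x. -/
open Real Set Topology Filter

/-- Partial derivative in the first (space) variable. -/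
noncomputable def pdx (f : ℝ × ℝ → ℝ) : ℝ × ℝ → ℝ :=
  fun p => deriv (fun x => f (x, p.2)) p.1

/-- Partial derivative in the second (time) variable. -/
noncomputable def pdt (f : ℝ × ℝ → ℝ) : ℝ × ℝ → ℝ :=
  fun p => deriv (fun t => f (p.1, t)) p.2

/-- The constant-coefficient parabolic operator `L f = f_xx + (k-h-1) f_x - k f - f_t`. -/
noncomputable def Lop (k h : ℝ) (f : ℝ × ℝ → ℝ) : ℝ × ℝ → ℝ :=
  fun p => pdx (pdx f) p + (k - h - 1) * pdx f p - k * f p - pdt f p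

variable {U : Set (ℝ × ℝ)} {f g : ℝ × ℝ → ℝ} {p : ℝ × ℝ} {n m : WithTop ℕ∞}

lemma lineX_hasFDerivAt (hf : DifferentiableAt ℝ f p) :
    HasDerivAt (fun x => f (x, p.2)) (fderiv ℝ f p (1, 0)) p.1 := by
  have h : HasDerivAt (fun x : ℝ => (x, p.2)) ((1 : ℝ), (0 : ℝ)) p.1 :=
    HasDerivAt.prodMk (hasDerivAt_id p.1) (hasDerivAt_const p.1 p.2)
  exact hf.hasFDerivAt.comp_hasDerivAt p.1 h

lemma lineT_hasFDerivAt (hf : DifferentiableAt ℝ f p) :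
    HasDerivAt (fun t => f (p.1, t)) (fderiv ℝ f p (0, 1)) p.2 := by
  have h : HasDerivAt (fun t : ℝ => (p.1, t)) ((0 : ℝ), (1 : ℝ)) p.2 :=
    HasDerivAt.prodMk (hasDerivAt_const p.2 p.1) (hasDerivAt_id p.2)
  exact hf.hasFDerivAt.comp_hasDerivAt p.2 h

lemma pdx_eq (hf : DifferentiableAt ℝ f p) : pdx f p = fderiv ℝ f p (1, 0) :=
  (lineX_hasFDerivAt hf).deriv

lemma pdt_eq (hf : DifferentiableAt ℝ f p) : pdt f p = fderiv ℝ f p (0, 1) :=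
  (lineT_hasFDerivAt hf).deriv

lemma lineX_hasDerivAt (hf : DifferentiableAt ℝ f p) :
    HasDerivAt (fun x => f (x, p.2)) (pdx f p) p.1 := by
  rw [pdx_eq hf]; exact lineX_hasFDerivAt hf

lemma lineT_hasDerivAt (hf : DifferentiableAt ℝ f p) :
    HasDerivAt (fun t => f (p.1, t)) (pdt f p) p.2 := by
  rw [pdt_eq hf]; exact lineT_hasFDerivAt hf

lemma diffAt_of_contDiffOn (hU : IsOpen U) (hf : ContDiffOn ℝ n f U) (hn : 1 ≤ n)
    (hp : p ∈ U) : DifferentiableAt ℝ f p :=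
  (hf.contDiffAt (hU.mem_nhds hp)).differentiableAt (lt_of_lt_of_le zero_lt_one hn).ne'

lemma pdx_contDiffOn (hU : IsOpen U) (hf : ContDiffOn ℝ n f U) (hmn : m + 1 ≤ n) :
    ContDiffOn ℝ m (pdx f) U := by
  have hD : ContDiffOn ℝ m (fun q => fderiv ℝ f q (1, 0)) U :=
    (hf.fderiv_of_isOpen hU hmn).clm_apply contDiffOn_const
  exact hD.congr fun q hq =>
    pdx_eq (diffAt_of_contDiffOn hU hf (le_trans le_add_self hmn) hq)

lemma pdt_contDiffOn (hU : IsOpen U) (hf : ContDiffOn ℝ n f U) (hmn : m + 1 ≤ n) :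
    ContDiffOn ℝ m (pdt f) U := by
  have hD : ContDiffOn ℝ m (fun q => fderiv ℝ f q (0, 1)) U :=
    (hf.fderiv_of_isOpen hU hmn).clm_apply contDiffOn_const
  exact hD.congr fun q hq =>
    pdt_eq (diffAt_of_contDiffOn hU hf (le_trans le_add_self hmn) hq)

lemma pdx_congr_nhds (hfg : f =ᶠ[𝓝 p] g) : pdx f p = pdx g p := by
  have ht : Filter.Tendsto (fun x : ℝ => (x, p.2)) (𝓝 p.1) (𝓝 p) := by
    have : Filter.Tendsto (fun x : ℝ => (x, p.2)) (𝓝 p.1) (𝓝 (p.1, p.2)) :=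
      (Continuous.prodMk_left p.2).tendsto p.1
    simpa using this
  exact (hfg.comp_tendsto ht).deriv_eq

lemma pdt_congr_nhds (hfg : f =ᶠ[𝓝 p] g) : pdt f p = pdt g p := by
  have ht : Filter.Tendsto (fun t : ℝ => (p.1, t)) (𝓝 p.2) (𝓝 p) := by
    have : Filter.Tendsto (fun t : ℝ => (p.1, t)) (𝓝 p.2) (𝓝 (p.1, p.2)) :=
      (Continuous.prodMk_right p.1).tendsto p.2
    simpa using this
  exact (hfg.comp_tendsto ht).deriv_eq

lemma clairaut (hU : IsOpen U) (hf : ContDiffOn ℝ 2 f U) (hp : p ∈ U) :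
    pdt (pdx f) p = pdx (pdt f) p := by
  have hdiff : ∀ q ∈ U, DifferentiableAt ℝ f q := fun q hq =>
    diffAt_of_contDiffOn hU hf (by norm_num) hq
  have hf' : DifferentiableAt ℝ (fderiv ℝ f) p :=
    ((hf.fderiv_of_isOpen hU (m := 1) (by norm_num)).differentiableOn one_ne_zero).differentiableAt
      (hU.mem_nhds hp)
  set f'' := fderiv ℝ (fderiv ℝ f) p with hf''def
  have hsymm : ∀ u v : ℝ × ℝ, f'' u v = f'' v u := by
    intro u v
    exact second_derivative_symmetric_of_eventually
      (Filter.eventually_of_mem (hU.mem_nhds hp) fun q hq => (hdiff q hq).hasFDerivAt)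
      hf'.hasFDerivAt u v
  have hevU : ∀ᶠ q in 𝓝 p, q ∈ U := hU.eventually_mem hp
  -- derivative of q ↦ fderiv f q u
  have hDdiff : ∀ u : ℝ × ℝ, DifferentiableAt ℝ (fun q => fderiv ℝ f q u) p := by
    intro u
    exact (ContinuousLinearMap.apply ℝ ℝ u).differentiableAt.comp p hf'
  have hDfd : ∀ u : ℝ × ℝ, fderiv ℝ (fun q => fderiv ℝ f q u) p =
      (ContinuousLinearMap.apply ℝ ℝ u).comp f'' := by
    intro u
    exact ((ContinuousLinearMap.apply ℝ ℝ u).hasFDerivAt.comp p hf'.hasFDerivAt).fderiv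
  have h1 : pdt (pdx f) p = f'' (0, 1) (1, 0) := by
    have hev : pdx f =ᶠ[𝓝 p] fun q => fderiv ℝ f q (1, 0) :=
      hevU.mono fun q hq => pdx_eq (hdiff q hq)
    rw [pdt_congr_nhds hev, pdt_eq (hDdiff (1, 0)), hDfd (1, 0)]
    rfl
  have h2 : pdx (pdt f) p = f'' (1, 0) (0, 1) := by
    have hev : pdt f =ᶠ[𝓝 p] fun q => fderiv ℝ f q (0, 1) :=
      hevU.mono fun q hq => pdt_eq (hdiff q hq)
    rw [pdx_congr_nhds hev, pdx_eq (hDdiff (0, 1)), hDfd (0, 1)]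
    rfl
  rw [h1, h2, hsymm]

lemma tendsto_lineX (q : ℝ × ℝ) : Filter.Tendsto (fun x : ℝ => (x, q.2)) (𝓝 q.1) (𝓝 q) := by
  have : Filter.Tendsto (fun x : ℝ => (x, q.2)) (𝓝 q.1) (𝓝 (q.1, q.2)) :=
    (Continuous.prodMk_left q.2).tendsto q.1
  simpa using this

lemma tendsto_lineT (q : ℝ × ℝ) : Filter.Tendsto (fun t : ℝ => (q.1, t)) (𝓝 q.2) (𝓝 q) := by
  have : Filter.Tendsto (fun t : ℝ => (q.1, t)) (𝓝 q.2) (𝓝 (q.1, q.2)) :=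
    (Continuous.prodMk_right q.1).tendsto q.2
  simpa using this


/-- If `w` is `C⁴` on an open set `U` with `L w = kK - h e^x` and
`w_xx > 0` on `U`, then `v = w_xt / w_xx` is well defined on `U` and satisfies the
parabolic equation `v_xx + ((k-h-1) + 2 w_xxx/w_xx) v_x + ((L w_xx)/w_xx) v - v_t = 0`
on `U`, where `L w_xx = -h e^x`. -/
theorem stmt_8 (K k h : ℝ) (hK : 0 < K)
    (U : Set (ℝ × ℝ)) (hU : IsOpen U)
    (w : ℝ × ℝ → ℝ) (hw : ContDiffOn ℝ 4 w U)
    (hLw : ∀ p ∈ U, Lop k h w p = k * K - h * Real.exp p.1)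
    (hwxx : ∀ p ∈ U, 0 < pdx (pdx w) p)
    (v : ℝ × ℝ → ℝ)
    (hv : ∀ p : ℝ × ℝ, v p = pdt (pdx w) p / pdx (pdx w) p) :
    ∀ p ∈ U,
      pdx (pdx v) p
          + ((k - h - 1) + 2 * pdx (pdx (pdx w)) p / pdx (pdx w) p) * pdx v p
          + (Lop k h (pdx (pdx w)) p / pdx (pdx w) p) * v p
          - pdt v p = 0
      ∧ Lop k h (pdx (pdx w)) p = -h * Real.exp p.1 := by

  intro p hp
  -- smoothness of the various partial derivatives
  have hw1 : ContDiffOn ℝ 3 (pdx w) U := pdx_contDiffOn hU hw (by norm_num)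
  have hw2 : ContDiffOn ℝ 2 (pdx (pdx w)) U := pdx_contDiffOn hU hw1 (by norm_num)
  have hw3 : ContDiffOn ℝ 1 (pdx (pdx (pdx w))) U := pdx_contDiffOn hU hw2 (by norm_num)
  have hwt : ContDiffOn ℝ 3 (pdt w) U := pdt_contDiffOn hU hw (by norm_num)
  have ha : ContDiffOn ℝ 2 (pdt (pdx w)) U := pdt_contDiffOn hU hw1 (by norm_num)
  have hax : ContDiffOn ℝ 1 (pdx (pdt (pdx w))) U := pdx_contDiffOn hU ha (by norm_num)
  have dA : ∀ {g : ℝ × ℝ → ℝ} {n : WithTop ℕ∞}, ContDiffOn ℝ n g U → 1 ≤ n →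
      ∀ q ∈ U, DifferentiableAt ℝ g q :=
    fun hg hn q hq => diffAt_of_contDiffOn hU hg hn hq
  -- Clairaut facts
  have ct1 : ∀ q ∈ U, pdt (pdx w) q = pdx (pdt w) q := fun q hq =>
    clairaut hU (hw.of_le (by norm_num)) hq
  have ct2 : ∀ q ∈ U, pdt (pdx (pdx w)) q = pdx (pdt (pdx w)) q := fun q hq =>
    clairaut hU (hw1.of_le (by norm_num)) hq
  have ct3 : ∀ q ∈ U, pdt (pdx (pdx (pdx w))) q = pdx (pdx (pdt (pdx w))) q := by
    intro q hq
    have h1 : pdt (pdx (pdx (pdx w))) q = pdx (pdt (pdx (pdx w))) q := clairaut hU hw2 hq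
    have hev : pdt (pdx (pdx w)) =ᶠ[𝓝 q] pdx (pdt (pdx w)) :=
      (hU.eventually_mem hq).mono fun r hr => ct2 r hr
    rw [h1, pdx_congr_nhds hev]
  -- differentiate the PDE in x : L w_x = -h e^x on U
  have hLw1 : ∀ q ∈ U, Lop k h (pdx w) q = -h * Real.exp q.1 := by
    intro q hq
    have h1 := lineX_hasDerivAt (dA hw2 (by norm_num) q hq)
    have h2 := lineX_hasDerivAt (dA hw1 (by norm_num) q hq)
    have h3 := lineX_hasDerivAt (dA hw (by norm_num) q hq)
    have h4 := lineX_hasDerivAt (dA hwt (by norm_num) q hq)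
    have hL : HasDerivAt (fun x => Lop k h w (x, q.2))
        (pdx (pdx (pdx w)) q + (k - h - 1) * pdx (pdx w) q - k * pdx w q
          - pdx (pdt w) q) q.1 := by
      have := ((h1.add (h2.const_mul (k - h - 1))).sub (h3.const_mul k)).sub h4
      simpa [Lop, mul_comm, Pi.add_def, Pi.sub_def] using this
    have hev : (fun x => Lop k h w (x, q.2)) =ᶠ[𝓝 q.1]
        fun x => k * K - h * Real.exp x :=
      ((tendsto_lineX q).eventually (hU.eventually_mem hq)).mono fun x hx => hLw _ hx
    have hR : HasDerivAt (fun x => k * K - h * Real.exp x) (-h * Real.exp q.1) q.1 := by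
      simpa [mul_comm, neg_mul, Pi.sub_def] using
        (hasDerivAt_const q.1 (k * K)).sub ((Real.hasDerivAt_exp q.1).const_mul h)
    have heq := (hL.congr_of_eventuallyEq hev.symm).unique hR
    show pdx (pdx (pdx w)) q + (k - h - 1) * pdx (pdx w) q - k * pdx w q
        - pdt (pdx w) q = -h * Real.exp q.1
    rw [ct1 q hq]; exact heq
  -- differentiate again in x : L w_xx = -h e^x at p
  have hLw2 : Lop k h (pdx (pdx w)) p = -h * Real.exp p.1 := by
    have h1 := lineX_hasDerivAt (dA hw3 (by norm_num) p hp)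
    have h2 := lineX_hasDerivAt (dA hw2 (by norm_num) p hp)
    have h3 := lineX_hasDerivAt (dA hw1 (by norm_num) p hp)
    have h4 := lineX_hasDerivAt (dA ha (by norm_num) p hp)
    have hL : HasDerivAt (fun x => Lop k h (pdx w) (x, p.2))
        (pdx (pdx (pdx (pdx w))) p + (k - h - 1) * pdx (pdx (pdx w)) p
          - k * pdx (pdx w) p - pdx (pdt (pdx w)) p) p.1 := by
      have := ((h1.add (h2.const_mul (k - h - 1))).sub (h3.const_mul k)).sub h4
      simpa [Lop, mul_comm, Pi.add_def, Pi.sub_def] using this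
    have hev : (fun x => Lop k h (pdx w) (x, p.2)) =ᶠ[𝓝 p.1]
        fun x => -h * Real.exp x :=
      ((tendsto_lineX p).eventually (hU.eventually_mem hp)).mono fun x hx => hLw1 _ hx
    have hR : HasDerivAt (fun x => -h * Real.exp x) (-h * Real.exp p.1) p.1 := by
      simpa using (Real.hasDerivAt_exp p.1).const_mul (-h)
    have heq := (hL.congr_of_eventuallyEq hev.symm).unique hR
    show pdx (pdx (pdx (pdx w))) p + (k - h - 1) * pdx (pdx (pdx w)) p
        - k * pdx (pdx w) p - pdt (pdx (pdx w)) p = -h * Real.exp p.1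
    rw [ct2 p hp]; exact heq
  -- differentiate L w_x = -h e^x in t : L w_xt = 0 at p
  have hLa : pdx (pdx (pdt (pdx w))) p + (k - h - 1) * pdx (pdt (pdx w)) p
      - k * pdt (pdx w) p - pdt (pdt (pdx w)) p = 0 := by
    have h1 := lineT_hasDerivAt (dA hw3 (by norm_num) p hp)
    have h2 := lineT_hasDerivAt (dA hw2 (by norm_num) p hp)
    have h3 := lineT_hasDerivAt (dA hw1 (by norm_num) p hp)
    have h4 := lineT_hasDerivAt (dA ha (by norm_num) p hp)
    have hL : HasDerivAt (fun t => Lop k h (pdx w) (p.1, t))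
        (pdt (pdx (pdx (pdx w))) p + (k - h - 1) * pdt (pdx (pdx w)) p
          - k * pdt (pdx w) p - pdt (pdt (pdx w)) p) p.2 := by
      have := ((h1.add (h2.const_mul (k - h - 1))).sub (h3.const_mul k)).sub h4
      simpa [Lop, mul_comm, Pi.add_def, Pi.sub_def] using this
    have hev : (fun t => Lop k h (pdx w) (p.1, t)) =ᶠ[𝓝 p.2]
        fun _ => -h * Real.exp p.1 :=
      ((tendsto_lineT p).eventually (hU.eventually_mem hp)).mono fun t ht => hLw1 _ ht
    have hR : HasDerivAt (fun _ : ℝ => -h * Real.exp p.1) 0 p.2 := hasDerivAt_const _ _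
    have heq := (hL.congr_of_eventuallyEq hev.symm).unique hR
    rw [ct3 p hp, ct2 p hp] at heq
    exact heq
  have hbne : ∀ q ∈ U, pdx (pdx w) q ≠ 0 := fun q hq => (hwxx q hq).ne'
  -- first derivatives of v
  have hvx : ∀ q ∈ U, pdx v q =
      (pdx (pdt (pdx w)) q * pdx (pdx w) q - pdt (pdx w) q * pdx (pdx (pdx w)) q)
        / (pdx (pdx w) q) ^ 2 := by
    intro q hq
    have hA := lineX_hasDerivAt (dA ha (by norm_num) q hq)
    have hB := lineX_hasDerivAt (dA hw2 (by norm_num) q hq)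
    have h := hA.div hB (hbne q hq)
    show deriv (fun x => v (x, q.2)) q.1 = _
    have hfun : (fun x => v (x, q.2)) =
        fun x => pdt (pdx w) (x, q.2) / pdx (pdx w) (x, q.2) := by
      funext x; exact hv _
    rw [hfun]
    exact h.deriv
  have hvt : pdt v p =
      (pdt (pdt (pdx w)) p * pdx (pdx w) p - pdt (pdx w) p * pdt (pdx (pdx w)) p)
        / (pdx (pdx w) p) ^ 2 := by
    have hA := lineT_hasDerivAt (dA ha (by norm_num) p hp)
    have hB := lineT_hasDerivAt (dA hw2 (by norm_num) p hp)
    have h := hA.div hB (hbne p hp)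
    show deriv (fun t => v (p.1, t)) p.2 = _
    have hfun : (fun t => v (p.1, t)) =
        fun t => pdt (pdx w) (p.1, t) / pdx (pdx w) (p.1, t) := by
      funext t; exact hv _
    rw [hfun]
    exact h.deriv
  -- second x-derivative of v
  have hvxx : pdx (pdx v) p =
      ((pdx (pdx (pdt (pdx w))) p * pdx (pdx w) p
          + pdx (pdt (pdx w)) p * pdx (pdx (pdx w)) p
        - (pdx (pdt (pdx w)) p * pdx (pdx (pdx w)) p
          + pdt (pdx w) p * pdx (pdx (pdx (pdx w))) p)) * pdx (pdx w) p ^ 2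
        - (pdx (pdt (pdx w)) p * pdx (pdx w) p
            - pdt (pdx w) p * pdx (pdx (pdx w)) p)
          * (2 * pdx (pdx w) p ^ 1 * pdx (pdx (pdx w)) p))
        / (pdx (pdx w) p ^ 2) ^ 2 := by
    have hev : pdx v =ᶠ[𝓝 p] fun q =>
        (pdx (pdt (pdx w)) q * pdx (pdx w) q - pdt (pdx w) q * pdx (pdx (pdx w)) q)
          / (pdx (pdx w) q) ^ 2 :=
      (hU.eventually_mem hp).mono fun q hq => hvx q hq
    rw [pdx_congr_nhds hev]
    have hA1 := lineX_hasDerivAt (dA hax (by norm_num) p hp)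
    have hB := lineX_hasDerivAt (dA hw2 (by norm_num) p hp)
    have hA := lineX_hasDerivAt (dA ha (by norm_num) p hp)
    have hB1 := lineX_hasDerivAt (dA hw3 (by norm_num) p hp)
    have hnum := (hA1.mul hB).sub (hA.mul hB1)
    have hden := hB.pow 2
    have h := hnum.div hden (pow_ne_zero 2 (hbne p hp))
    exact h.deriv
  -- put everything together
  refine ⟨?_, hLw2⟩
  have hAt : pdt (pdt (pdx w)) p =
      pdx (pdx (pdt (pdx w))) p + (k - h - 1) * pdx (pdt (pdx w)) p
        - k * pdt (pdx w) p := by linarith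
  have hLb : Lop k h (pdx (pdx w)) p =
      pdx (pdx (pdx (pdx w))) p + (k - h - 1) * pdx (pdx (pdx w)) p
        - k * pdx (pdx w) p - pdx (pdt (pdx w)) p := by
    show pdx (pdx (pdx (pdx w))) p + (k - h - 1) * pdx (pdx (pdx w)) p
        - k * pdx (pdx w) p - pdt (pdx (pdx w)) p = _
    rw [ct2 p hp]
  rw [hvxx, hvx p hp, hvt, hv p, hAt, hLb, ct2 p hp]
  have hB0 := hbne p hp
  field_simp
  ring
end

section
/- Let d ∈ ℝ, let s : (0,∞) → ℝ be continuous and strictly decreasing with s(t) < d for all t > 0, set C_d = {(x,t) : s(t) < x < d, t > 0} and let C̄_d be its closure. Let I be an open interval on which s is twice differentiable with s''(t) < 0 (strictly concave). Let v be continuous on C̄_d with v(s(t),t) = −s'(t) for t ∈ I, and suppose that for each t₀ ∈ I the one-sided partial derivative v_x(s(t₀),t₀) (from inside C_d) exists and is strictly positive. Then for every t₀ ∈ I, v does not attain an extremum at (s(t₀),t₀) with respect to any lower C̄_d-neighborhood of (s(t₀),t₀): for every neighborhood N of (s(t₀),t₀) in ℝ², v(s(t₀),t₀) is neither the maximum nor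 the minimum of v on N ∩ C̄_d ∩ {(x,t) : t ≤ t₀}. -/
open Real Set Filter Topology

/-- If `s` is strictly concave on an open interval `I`, then for any
`t₀ ∈ I` the function `v` (equal to `-s'(t)` on the free boundary, with strictly
positive one-sided `x`-derivative at the boundary) cannot attain an extremum at
`(s(t₀),t₀)` with respect to any lower `C̄_d`-neighborhood of `(s(t₀),t₀)`. -/
theorem stmt_10 (d : ℝ) (s : ℝ → ℝ)
    (hscont : ContinuousOn s (Ioi 0))
    (hsanti : StrictAntiOn s (Ioi 0))
    (hsd : ∀ t ∈ Ioi (0:ℝ), s t < d)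
    (Cd : Set (ℝ × ℝ))
    (hCd : Cd = {p : ℝ × ℝ | 0 < p.2 ∧ s p.2 < p.1 ∧ p.1 < d})
    (I : Set ℝ) (a b : ℝ) (hI : I = Ioo a b) (hIpos : I ⊆ Ioi 0)
    (s' s'' : ℝ → ℝ)
    (hs' : ∀ t ∈ I, HasDerivAt s (s' t) t)
    (hs'' : ∀ t ∈ I, HasDerivAt s' (s'' t) t)
    (hconc : ∀ t ∈ I, s'' t < 0)
    (v : ℝ × ℝ → ℝ)
    (hvcont : ContinuousOn v (closure Cd))
    (hvbd : ∀ t ∈ I, v (s t, t) = -s' t)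
    (hvx : ∀ t₀ ∈ I, ∃ vx : ℝ, 0 < vx ∧
      HasDerivWithinAt (fun x => v (x, t₀)) vx (Icc (s t₀) d) (s t₀)) :
    ∀ t₀ ∈ I, ∀ N ∈ nhds ((s t₀, t₀) : ℝ × ℝ),
      ¬ IsMaxOn v (N ∩ closure Cd ∩ {p : ℝ × ℝ | p.2 ≤ t₀}) (s t₀, t₀)
      ∧ ¬ IsMinOn v (N ∩ closure Cd ∩ {p : ℝ × ℝ | p.2 ≤ t₀}) (s t₀, t₀) := by
  subst hCd hI
  intro t₀ ht₀ N hN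
  have ht₀pos : 0 < t₀ := hIpos ht₀
  have hsd₀ : s t₀ < d := hsd t₀ (hIpos ht₀)
  -- boundary points are in the closure of Cd
  have hcl : ∀ t ∈ Ioo a b,
      (s t, t) ∈ closure {p : ℝ × ℝ | 0 < p.2 ∧ s p.2 < p.1 ∧ p.1 < d} := by
    intro t ht
    have h1 : Ioo (s t) d ×ˢ ({t} : Set ℝ) ⊆
        {p : ℝ × ℝ | 0 < p.2 ∧ s p.2 < p.1 ∧ p.1 < d} := by
      rintro ⟨x, t'⟩ ⟨hx, ht'⟩
      simp only [mem_singleton_iff] at ht'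
      subst ht'
      exact ⟨hIpos ht, hx.1, hx.2⟩
    apply closure_mono h1
    rw [closure_prod_eq, closure_Ioo (hsd t (hIpos ht)).ne]
    exact ⟨⟨le_refl _, (hsd t (hIpos ht)).le⟩, by simp⟩
  constructor
  · -- not a max: use positive one-sided x-derivative
    intro hmax
    obtain ⟨vx, hvxpos, hder⟩ := hvx t₀ ht₀
    have hder' : HasDerivWithinAt (fun x => v (x, t₀)) vx (Ioo (s t₀) d) (s t₀) :=
      hder.mono Ioo_subset_Icc_self
    rw [hasDerivWithinAt_iff_tendsto_slope] at hder'
    have hset : Ioo (s t₀) d \ {s t₀} = Ioo (s t₀) d :=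
      diff_singleton_eq_self (by simp)
    rw [hset] at hder'
    have hNB : (𝓝[Ioo (s t₀) d] (s t₀)).NeBot := by
      rw [← mem_closure_iff_nhdsWithin_neBot, closure_Ioo hsd₀.ne]
      exact ⟨le_refl _, hsd₀.le⟩
    have hpre : {x : ℝ | (x, t₀) ∈ N} ∈ 𝓝 (s t₀) :=
      (Continuous.continuousAt (by continuity :
        Continuous (fun x : ℝ => ((x, t₀) : ℝ × ℝ)))).preimage_mem_nhds hN
    have hev : ∀ᶠ x in 𝓝[Ioo (s t₀) d] (s t₀),
        0 < slope (fun x => v (x, t₀)) (s t₀) x ∧ x ∈ Ioo (s t₀) d ∧ (x, t₀) ∈ N :=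
      (hder'.eventually (eventually_gt_nhds hvxpos)).and
        (eventually_mem_nhdsWithin.and (mem_nhdsWithin_of_mem_nhds hpre))
    obtain ⟨x, hslope, hxI, hxN⟩ := hev.exists
    have hx0 : 0 < x - s t₀ := sub_pos.2 hxI.1
    rw [slope_def_field, div_pos_iff] at hslope
    have hvgt : v (s t₀, t₀) < v (x, t₀) := by
      rcases hslope with ⟨h1, _⟩ | ⟨_, h2⟩
      · linarith
      · linarith
    have hmem : ((x, t₀) : ℝ × ℝ) ∈ N ∩
        closure {p : ℝ × ℝ | 0 < p.2 ∧ s p.2 < p.1 ∧ p.1 < d} ∩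
        {p : ℝ × ℝ | p.2 ≤ t₀} :=
      ⟨⟨hxN, subset_closure ⟨ht₀pos, hxI.1, hxI.2⟩⟩, show ((x, t₀) : ℝ × ℝ).2 ≤ t₀ from le_refl _⟩
    exact absurd (hmax hmem) (not_le.2 hvgt)
  · -- not a min: use strict concavity along the boundary
    intro hmin
    have hmono : StrictMonoOn (fun t => -s' t) (Ioo a b) := by
      apply strictMonoOn_of_deriv_pos (convex_Ioo a b)
      · intro t ht
        exact ((hs'' t ht).neg).continuousAt.continuousWithinAt
      · intro t ht
        rw [interior_Ioo] at ht
        rw [show (fun t => -s' t) = -s' from rfl, ((hs'' t ht).neg).deriv]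
        linarith [hconc t ht]
    have hφ : ContinuousAt (fun t : ℝ => ((s t, t) : ℝ × ℝ)) t₀ :=
      (hs' t₀ ht₀).continuousAt.prodMk continuousAt_id
    have hpre : {t : ℝ | ((s t, t) : ℝ × ℝ) ∈ N} ∈ 𝓝 t₀ := hφ.preimage_mem_nhds hN
    have hNB : (𝓝[Iio t₀] t₀).NeBot := nhdsLT_neBot t₀
    have h1 : ∀ᶠ t in 𝓝[Iio t₀] t₀, ((s t, t) : ℝ × ℝ) ∈ N :=
      mem_nhdsWithin_of_mem_nhds hpre
    have h2 : ∀ᶠ t in 𝓝[Iio t₀] t₀, t ∈ Ioo a b :=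
      mem_nhdsWithin_of_mem_nhds (isOpen_Ioo.mem_nhds ht₀)
    have hev : ∀ᶠ t in 𝓝[Iio t₀] t₀,
        (((s t, t) : ℝ × ℝ) ∈ N ∧ t ∈ Ioo a b) ∧ t ∈ Iio t₀ :=
      (h1.and h2).and eventually_mem_nhdsWithin
    obtain ⟨t, ⟨htN, htI⟩, htlt⟩ := hev.exists
    have hvlt : v (s t, t) < v (s t₀, t₀) := by
      rw [hvbd t htI, hvbd t₀ ht₀]
      exact hmono htI ht₀ htlt
    have hmem : ((s t, t) : ℝ × ℝ) ∈ N ∩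
        closure {p : ℝ × ℝ | 0 < p.2 ∧ s p.2 < p.1 ∧ p.1 < d} ∩
        {p : ℝ × ℝ | p.2 ≤ t₀} :=
      ⟨⟨htN, hcl t htI⟩, show ((s t, t) : ℝ × ℝ).2 ≤ t₀ from le_of_lt htlt⟩
    exact absurd (hmin hmem) (not_le.2 hvlt)
end
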